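/- With the divisor topology, X_S is a compact topological space. -/

import Mathlib

/-- The supernatural (Steinitz) numbers other than 1, modeled as functions from the primes to
`ℕ∞ = ℕ ∪ ∞` that are not identically zero. -/
def Supernatural : Type := {f : Nat.Primes → ℕ∞ // f ≠ 0}

/-- The divisor topology on the supernatural numbers (other than 1), generated by the sets
`U(g) = {h : h ≼ g}` where `≼` is the pointwise order (divisibility of supernatural numbers). -/
def supernaturalTopology : TopologicalSpace Supernatural :=
  TopologicalSpace.generateFrom
    {U : Set Supernatural |
      ∃ g : Supernatural, U = {h : Supernatural | ∀ p : Nat.Primes, h.1 p ≤ g.1 p}}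

/-- The top supernatural number, with all exponents infinite. -/
def supTop : Supernatural :=
  ⟨fun _ => ⊤, by
    intro h
    have := congrFun h ⟨2, Nat.prime_two⟩
    exact (by simp : (⊤ : ℕ∞) ≠ 0) this⟩

lemma open_mem_top_eq_univ (U : Set Supernatural)
    (hU : TopologicalSpace.GenerateOpen
      {U : Set Supernatural |
        ∃ g : Supernatural, U = {h : Supernatural | ∀ p : Nat.Primes, h.1 p ≤ g.1 p}} U)
    (hmem : supTop ∈ U) : U = Set.univ := by
  induction hU with
  | basic V hV =>
      obtain ⟨g, rfl⟩ := hV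
      ext h
      simp only [Set.mem_setOf_eq, Set.mem_univ, iff_true]
      intro p
      have := hmem p
      simp only [supTop, top_le_iff] at this
      rw [this]
      exact le_top
  | univ => rfl
  | inter V W _ _ ihV ihW =>
      rw [ihV hmem.1, ihW hmem.2, Set.univ_inter]
  | sUnion S _ ihS =>
      obtain ⟨V, hVS, hV⟩ := hmem
      apply Set.eq_univ_of_univ_subset
      rw [← ihS V hVS hV]
      exact Set.subset_sUnion_of_mem hVS

/-- With the divisor topology, the supernatural numbers (other than 1) form a compact
topological space. -/
theorem stmt_4 : @CompactSpace Supernatural supernaturalTopology := by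
  letI := supernaturalTopology
  have hnhds : nhds supTop = ⊤ := by
    apply le_antisymm le_top
    intro s hs
    rcases mem_nhds_iff.mp hs with ⟨t, hts, hto, hmem⟩
    have : t = Set.univ := open_mem_top_eq_univ t hto hmem
    rw [Filter.mem_top]
    exact Set.eq_univ_of_univ_subset (this ▸ hts)
  constructor
  intro f hne _
  refine ⟨supTop, Set.mem_univ _, ?_⟩
  rw [ClusterPt, hnhds, top_inf_eq]
  exact hne
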